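/- arXiv:2111.02970 — 2 statements merged into one kernel-verified Lean document; each statement's English description precedes it below -/
import Mathlib

section
/- Let f : ℝ^d → ℝ be continuous, K ⊂ ℝ^d compact, 𝓐 : ℝ^d → ℝ^m continuous with feasible set B = {x ∈ K : 𝓐(x) = 0} nonempty, and suppose the constrained minimizer x* of f over B is unique. For ν > 0 let x_ν ∈ K minimize g_ν(x) = f(x) + (1/ν)|𝓐(x)|² over K. Then every accumulation point of (x_ν) as ν → 0 belongs to B and minimizes f over B; hence x_ν → x*. -/
open Filter

/-- Convergence of penalized minimizers: if for each `ν > 0`, `x_ν` minimizes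
`g_ν = f + ν⁻¹|𝓐|²` over the compact set `K`, then every accumulation point of
`(x_ν)` as `ν → 0⁺` is feasible and minimizes `f` over the feasible set
`B = {x ∈ K : 𝓐(x) = 0}`; by uniqueness of the constrained minimizer `x*`,
it follows that `x_ν → x*` as `ν → 0⁺`. -/
theorem penalty_minimizers_converge
    {d m : ℕ} (f : EuclideanSpace ℝ (Fin d) → ℝ) (hf : Continuous f)
    (K : Set (EuclideanSpace ℝ (Fin d))) (hK : IsCompact K)
    (A : EuclideanSpace ℝ (Fin d) → EuclideanSpace ℝ (Fin m)) (hA : Continuous A)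
    (B : Set (EuclideanSpace ℝ (Fin d))) (hB : B = {x ∈ K | A x = 0})
    (xstar : EuclideanSpace ℝ (Fin d)) (hxstarB : xstar ∈ B)
    (hxstar : ∀ y ∈ B, y ≠ xstar → f xstar < f y)
    (x : ℝ → EuclideanSpace ℝ (Fin d))
    (hxK : ∀ ν : ℝ, 0 < ν → x ν ∈ K)
    (hxmin : ∀ ν : ℝ, 0 < ν →
      ∀ y ∈ K, f (x ν) + ν⁻¹ * ‖A (x ν)‖ ^ 2 ≤ f y + ν⁻¹ * ‖A y‖ ^ 2) :
    (∀ z, MapClusterPt z (nhdsWithin (0 : ℝ) (Set.Ioi 0)) x →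
        z ∈ B ∧ ∀ y ∈ B, f z ≤ f y) ∧
      Tendsto x (nhdsWithin (0 : ℝ) (Set.Ioi 0)) (nhds xstar) := by
  set l : Filter ℝ := nhdsWithin (0 : ℝ) (Set.Ioi 0) with hl
  have hxstarK : xstar ∈ K := by rw [hB] at hxstarB; exact hxstarB.1
  have hAxstar : A xstar = 0 := by rw [hB] at hxstarB; exact hxstarB.2
  -- lower bound for f on K
  obtain ⟨c, hcK, hc⟩ := hK.exists_isMinOn ⟨xstar, hxstarK⟩ hf.continuousOn
  -- key inequality: g_ν (x ν) ≤ f xstar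
  have hkey : ∀ ν : ℝ, 0 < ν → f (x ν) + ν⁻¹ * ‖A (x ν)‖ ^ 2 ≤ f xstar := by
    intro ν hν
    have := hxmin ν hν xstar hxstarK
    simpa [hAxstar] using this
  have hpen_nonneg : ∀ ν : ℝ, 0 < ν → 0 ≤ ν⁻¹ * ‖A (x ν)‖ ^ 2 := fun ν hν =>
    mul_nonneg (by positivity) (by positivity)
  have hfle : ∀ ν : ℝ, 0 < ν → f (x ν) ≤ f xstar := fun ν hν =>
    le_trans (le_add_of_nonneg_right (hpen_nonneg ν hν)) (hkey ν hν)
  have hAbound : ∀ ν : ℝ, 0 < ν → ‖A (x ν)‖ ^ 2 ≤ ν * (f xstar - f c) := by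
    intro ν hν
    have h1 : f c ≤ f (x ν) := hc (hxK ν hν)
    have h2 : ν⁻¹ * ‖A (x ν)‖ ^ 2 ≤ f xstar - f (x ν) := by linarith [hkey ν hν]
    have h3 : ν⁻¹ * ‖A (x ν)‖ ^ 2 ≤ f xstar - f c := by linarith
    calc ‖A (x ν)‖ ^ 2 = ν * (ν⁻¹ * ‖A (x ν)‖ ^ 2) := by
          field_simp
      _ ≤ ν * (f xstar - f c) := by
          exact mul_le_mul_of_nonneg_left h3 hν.le
  have hmemIoi : ∀ᶠ ν in l, ν ∈ Set.Ioi (0 : ℝ) := self_mem_nhdsWithin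
  have hxKev : ∀ᶠ ν in l, x ν ∈ K := hmemIoi.mono fun ν hν => hxK ν hν
  -- the penalty term tends to zero, hence A ∘ x tends to 0
  have hsq : Tendsto (fun ν => ‖A (x ν)‖ ^ 2) l (nhds 0) := by
    have hub : Tendsto (fun ν : ℝ => ν * (f xstar - f c)) l (nhds 0) := by
      have : Tendsto (fun ν : ℝ => ν * (f xstar - f c)) (nhds 0) (nhds 0) := by
        exact Continuous.tendsto' (f := fun ν : ℝ => ν * (f xstar - f c)) (continuous_id.mul continuous_const) 0 0 (by simp)
      exact this.mono_left nhdsWithin_le_nhds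
    refine squeeze_zero' ?_ ?_ hub
    · exact hmemIoi.mono fun ν _ => by positivity
    · exact hmemIoi.mono fun ν hν => hAbound ν hν
  have hAx : Tendsto (fun ν => A (x ν)) l (nhds 0) := by
    rw [tendsto_zero_iff_norm_tendsto_zero]
    have := (Real.continuous_sqrt.tendsto 0).comp hsq
    simp only [Real.sqrt_zero] at this
    refine this.congr fun ν => ?_
    simp [Function.comp, Real.sqrt_sq (norm_nonneg _)]
  -- every cluster point is in B and minimizes f over B
  have hclus : ∀ z, MapClusterPt z l x → z ∈ B ∧ ∀ y ∈ B, f z ≤ f y := by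
    intro z hz
    have hzK : z ∈ K := by
      have hKm : K ∈ Filter.map x l := mem_map.2 hxKev
      have : ClusterPt z (Filter.principal K) :=
        hz.clusterPt.mono (le_principal_iff.2 hKm)
      rw [← hK.isClosed.closure_eq]
      exact mem_closure_iff_clusterPt.2 this
    have hAz : A z = 0 := by
      have h1 : MapClusterPt (A z) l (A ∘ x) := hz.continuousAt_comp hA.continuousAt
      have h2 : ClusterPt (A z) (nhds 0) :=
        h1.clusterPt.mono hAx
      exact eq_of_nhds_neBot h2
    have hfz : f z ≤ f xstar := by
      have h1 : MapClusterPt (f z) l (f ∘ x) := hz.continuousAt_comp hf.continuousAt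
      have hs : Set.Iic (f xstar) ∈ Filter.map (f ∘ x) l :=
        mem_map.2 (hmemIoi.mono fun ν hν => hfle ν hν)
      have h2 : ClusterPt (f z) (Filter.principal (Set.Iic (f xstar))) :=
        h1.clusterPt.mono (le_principal_iff.2 hs)
      have := mem_closure_iff_clusterPt.2 h2
      rwa [isClosed_Iic.closure_eq] at this
    have hzB : z ∈ B := by rw [hB]; exact ⟨hzK, hAz⟩
    refine ⟨hzB, fun y hy => ?_⟩
    by_cases hxy : y = xstar
    · rw [hxy]; exact hfz
    · exact hfz.trans (hxstar y hy hxy).le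
  refine ⟨hclus, ?_⟩
  exact hK.tendsto_nhds_of_unique_mapClusterPt hxKev fun z hzK hz => by
    obtain ⟨hzB, hzmin⟩ := hclus z hz
    by_contra hne
    exact absurd (hzmin xstar hxstarB) (not_le.2 (hxstar z hzB hne))
end

section
/- Suppose the forward map is linear, G(x) = G x for a matrix G ∈ ℝ^{K×d}. Then the EKI particle dynamics dx^{(j)} = −(1/J) ∑_k ⟨G(x^{(k)}) − Ḡ, G(x^{(j)}) − y⟩_Γ (x^{(k)} − x̄) dt − C(μ^J) Σ^{−1}(x^{(j)} − a) dt coincides with the preconditioned gradient flow dx^{(j)} = −C(μ^J) ∇Φ_R(x^{(j)}) dt, where Φ_R(x) = ½|Γ^{−1/2}(y − Gx)|² + ½|Σ^{−1/2}(x − a)|² and C(μ^J) = (1/J) ∑_k (x^{(k)} − x̄) ⊗ (x^{(k)} − x̄). -/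
open scoped RealInnerProductSpace

/-- Auxiliary: the gradient of the regularized least-squares functional with
symmetric weight operators. -/
theorem eki_aux_hasGradientAt {d K : ℕ}
    (G : Matrix (Fin K) (Fin d) ℝ)
    (A : EuclideanSpace ℝ (Fin K) →ₗ[ℝ] EuclideanSpace ℝ (Fin K))
    (hA : A.IsSymmetric)
    (B : EuclideanSpace ℝ (Fin d) →ₗ[ℝ] EuclideanSpace ℝ (Fin d))
    (hB : B.IsSymmetric)
    (y : EuclideanSpace ℝ (Fin K)) (a x0 : EuclideanSpace ℝ (Fin d))
    (ΦR : EuclideanSpace ℝ (Fin d) → ℝ)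
    (hΦR : ∀ z, ΦR z =
      (1 / 2) * ⟪y - G.toEuclideanLin z, A (y - G.toEuclideanLin z)⟫
        + (1 / 2) * ⟪z - a, B (z - a)⟫) :
    HasGradientAt ΦR
      ((LinearMap.adjoint G.toEuclideanLin) (A (G.toEuclideanLin x0 - y)) + B (x0 - a)) x0 := by
  set L := G.toEuclideanLin with hL
  have he : HasFDerivAt (fun z : EuclideanSpace ℝ (Fin d) => y - L z)
      (-(L.toContinuousLinearMap)) x0 := by
    exact ((hasFDerivAt_const y x0).sub (L.toContinuousLinearMap.hasFDerivAt)).congr_fderiv (zero_sub _)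
  have hAe : HasFDerivAt (fun z : EuclideanSpace ℝ (Fin d) => A (y - L z))
      (A.toContinuousLinearMap.comp (-(L.toContinuousLinearMap))) x0 :=
    (A.toContinuousLinearMap.hasFDerivAt).comp x0 he
  have h1 := (he.inner ℝ hAe)
  have he2 : HasFDerivAt (fun z : EuclideanSpace ℝ (Fin d) => z - a)
      (ContinuousLinearMap.id ℝ _) x0 := by
    exact (hasFDerivAt_id x0).sub_const a
  have hBe : HasFDerivAt (fun z : EuclideanSpace ℝ (Fin d) => B (z - a))
      (B.toContinuousLinearMap) x0 :=
    (B.toContinuousLinearMap.hasFDerivAt).comp x0 he2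
  have h2 := (he2.inner ℝ hBe)
  have htot := ((h1.const_mul ((1:ℝ)/2)).add (h2.const_mul ((1:ℝ)/2)))
  rw [hasGradientAt_iff_hasFDerivAt]
  refine HasFDerivAt.congr_fderiv (htot.congr_of_eventuallyEq ?_) ?_
  · filter_upwards with z; rw [hΦR z]; rfl
  · ext v
    simp only [ContinuousLinearMap.add_apply, ContinuousLinearMap.smul_apply,
      ContinuousLinearMap.comp_apply, ContinuousLinearMap.prod_apply,
      ContinuousLinearMap.neg_apply, ContinuousLinearMap.id_apply,
      LinearMap.coe_toContinuousLinearMap', fderivInnerCLM_apply, smul_eq_mul,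
      InnerProductSpace.toDual_apply_apply]
    have e1 : ⟪y - L x0, A (-(L v))⟫ = ⟪-(L v), A (y - L x0)⟫ := by
      rw [← hA]; exact real_inner_comm _ _
    have e2 : ⟪(LinearMap.adjoint L) (A (L x0 - y)) + B (x0 - a), v⟫
        = ⟪A (L x0 - y), L v⟫ + ⟪B (x0 - a), v⟫ := by
      rw [inner_add_left, LinearMap.adjoint_inner_left]
    have e3 : ⟪B (x0 - a), v⟫ = ⟪x0 - a, B v⟫ := hB _ _
    have e4 : ⟪v, B (x0 - a)⟫ = ⟪B (x0 - a), v⟫ := real_inner_comm _ _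
    have e5 : ⟪-(L v), A (y - L x0)⟫ = ⟪A (L x0 - y), L v⟫ := by
      rw [inner_neg_left, real_inner_comm, show y - L x0 = -(L x0 - y) by rw [neg_sub],
        map_neg, inner_neg_left, neg_neg]
    rw [e2]
    linarith [e1, e3, e4, e5]

/-- For a linear forward map `G(x) = Gx`, the (regularized) EKI drift coincides,
for each ensemble member `j`, with a gradient descent preconditioned by the
ensemble covariance: `−(1/J)∑ₖ ⟨Gx⁽ᵏ⁾ − Ḡ, Gx⁽ʲ⁾ − y⟩_Γ (x⁽ᵏ⁾ − x̄) − C(μᴶ)Σ⁻¹(x⁽ʲ⁾ − a)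
= −C(μᴶ) ∇Φ_R(x⁽ʲ⁾)`, where `Φ_R(x) = ½⟨y − Gx, Γ⁻¹(y − Gx)⟩ + ½⟨x − a, Σ⁻¹(x − a)⟩`
and `C(μᴶ)v = (1/J)∑ₖ ⟨x⁽ᵏ⁾ − x̄, v⟩ (x⁽ᵏ⁾ − x̄)`. -/
theorem eki_linear_is_preconditioned_gradient_flow
    {d K J : ℕ}
    (G : Matrix (Fin K) (Fin d) ℝ)
    (Γ : Matrix (Fin K) (Fin K) ℝ) (hΓ : Γ.PosDef)
    (S : Matrix (Fin d) (Fin d) ℝ) (hS : S.PosDef)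
    (y : EuclideanSpace ℝ (Fin K)) (a : EuclideanSpace ℝ (Fin d))
    (x : Fin J → EuclideanSpace ℝ (Fin d))
    (xbar : EuclideanSpace ℝ (Fin d)) (hxbar : xbar = (J : ℝ)⁻¹ • ∑ k, x k)
    (Gbar : EuclideanSpace ℝ (Fin K))
    (hGbar : Gbar = (J : ℝ)⁻¹ • ∑ k, G.toEuclideanLin (x k))
    (C : EuclideanSpace ℝ (Fin d) →ₗ[ℝ] EuclideanSpace ℝ (Fin d))
    (hC : ∀ v, C v = (J : ℝ)⁻¹ • ∑ k, ⟪x k - xbar, v⟫ • (x k - xbar))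
    (ΦR : EuclideanSpace ℝ (Fin d) → ℝ)
    (hΦR : ∀ z, ΦR z =
      (1 / 2) * ⟪y - G.toEuclideanLin z, Γ⁻¹.toEuclideanLin (y - G.toEuclideanLin z)⟫
        + (1 / 2) * ⟪z - a, S⁻¹.toEuclideanLin (z - a)⟫)
    (j : Fin J) :
    -((J : ℝ)⁻¹ • ∑ k, ⟪G.toEuclideanLin (x k) - Gbar,
          Γ⁻¹.toEuclideanLin (G.toEuclideanLin (x j) - y)⟫ • (x k - xbar))
        - C (S⁻¹.toEuclideanLin (x j - a))
      = -C (gradient ΦR (x j)) := by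
  set L := G.toEuclideanLin with hLdef
  set A := Γ⁻¹.toEuclideanLin with hAdef
  set B := S⁻¹.toEuclideanLin with hBdef
  have hA : A.IsSymmetric := Matrix.isHermitian_iff_isSymmetric.mp hΓ.isHermitian.inv
  have hB : B.IsSymmetric := Matrix.isHermitian_iff_isSymmetric.mp hS.isHermitian.inv
  have hgrad : gradient ΦR (x j)
      = (LinearMap.adjoint L) (A (L (x j) - y)) + B (x j - a) :=
    (eki_aux_hasGradientAt G A hA B hB y a (x j) ΦR hΦR).gradient
  have hGxbar : L xbar = Gbar := by
    rw [hxbar, hGbar, map_smul, map_sum]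
  have hkey : (J : ℝ)⁻¹ • ∑ k, ⟪L (x k) - Gbar, A (L (x j) - y)⟫ • (x k - xbar)
      = C ((LinearMap.adjoint L) (A (L (x j) - y))) := by
    rw [hC]
    congr 1
    refine Finset.sum_congr rfl fun k _ => ?_
    rw [LinearMap.adjoint_inner_right,
      show L (x k - xbar) = L (x k) - Gbar from by rw [map_sub, hGxbar]]
  rw [hgrad, map_add, hkey]
  abel
end
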